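/- For all indices a, b, c, d ∈ Fin 2, the Haar integral ∫_{SU(2)} g(a,b) · g(c,d) dμ(g) equals (1/2) ε(a,c) ε(b,d), where ε is the antisymmetric symbol on Fin 2 given by ε(0,1) = 1, ε(1,0) = −1, ε(0,0) = ε(1,1) = 0. (This expresses that group-averaging the two-fold tensor power of the fundamental representation, ∫ dg D^{1/2}(g) ⊗ D^{1/2}(g), is the orthogonal projection onto the one-dimensional singlet subspace of V^{1/2} ⊗ V^{1/2}, spanned by (|↑↓⟩ − |↓↑⟩)/√2.) -/

import Mathlib

open MeasureTheory Matrix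

noncomputable section

/-- `SU(2)`: the special unitary group of `2 × 2` complex matrices. -/
abbrev SU2 := Matrix.specialUnitaryGroup (Fin 2) ℂ

/-- The group structure on `SU(2)` (inverse given by the conjugate transpose). -/
instance : Group SU2 :=
  { (inferInstance : Monoid SU2) with
    inv := fun g =>
      ⟨star g.1, Submonoid.mem_inf.2
        ⟨Unitary.star_mem (Submonoid.mem_inf.1 g.2).1, by
          have h : (g.1).det = 1 := (Submonoid.mem_inf.1 g.2).2
          simp [MonoidHom.mem_mker, Matrix.star_eq_conjTranspose, Matrix.det_conjTranspose, h]⟩⟩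
    inv_mul_cancel := fun g => Subtype.ext (Submonoid.mem_inf.1 g.2).1.1 }

/-- The Borel σ-algebra on `SU(2)` (with its subspace topology). -/
instance : MeasurableSpace SU2 := borel _

/-- The antisymmetric symbol `ε` on `Fin 2`: `ε(0,1) = 1`, `ε(1,0) = −1`, `ε(0,0) = ε(1,1) = 0`. -/
def eps : Fin 2 → Fin 2 → ℂ := fun a b =>
  if a = 0 ∧ b = 1 then 1 else if a = 1 ∧ b = 0 then -1 else 0

instance : BorelSpace SU2 := ⟨rfl⟩
instance : SecondCountableTopology (Matrix (Fin 2) (Fin 2) ℂ) :=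
  inferInstanceAs (SecondCountableTopology (Fin 2 → Fin 2 → ℂ))
instance : SecondCountableTopology SU2 := TopologicalSpace.Subtype.secondCountableTopology _

lemma continuous_entry (a b : Fin 2) : Continuous fun g : SU2 => (g : SU2).1 a b :=
  (continuous_apply b).comp ((continuous_apply a).comp continuous_subtype_val)

lemma entry_norm_le (g : SU2) (a b : Fin 2) : ‖(g : SU2).1 a b‖ ≤ 1 := by
  have hu : star g.1 * g.1 = 1 := Matrix.mem_unitaryGroup_iff'.mp (Submonoid.mem_inf.1 g.2).1
  have h : (star g.1 * g.1) b b = 1 := by rw [hu]; simp [Matrix.one_apply]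
  rw [Matrix.mul_apply, Fin.sum_univ_two] at h
  simp only [Matrix.star_eq_conjTranspose, Matrix.conjTranspose_apply, RCLike.star_def] at h
  rw [Complex.conj_mul', Complex.conj_mul'] at h
  have hre : ‖(g : SU2).1 0 b‖ ^ 2 + ‖(g : SU2).1 1 b‖ ^ 2 = 1 := by exact_mod_cast h
  fin_cases a
  · show ‖(g : SU2).1 0 b‖ ≤ 1
    nlinarith [norm_nonneg ((g : SU2).1 0 b), sq_nonneg ‖(g : SU2).1 1 b‖]
  · show ‖(g : SU2).1 1 b‖ ≤ 1
    nlinarith [norm_nonneg ((g : SU2).1 1 b), sq_nonneg ‖(g : SU2).1 0 b‖]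

lemma integrable_entry (μ : Measure SU2) [IsFiniteMeasure μ] (a b c d : Fin 2) :
    Integrable (fun g : SU2 => (g : SU2).1 a b * (g : SU2).1 c d) μ := by
  refine ⟨((continuous_entry a b).mul (continuous_entry c d)).aestronglyMeasurable, ?_⟩
  apply HasFiniteIntegral.of_bounded (C := 1)
  filter_upwards with g
  rw [norm_mul]
  calc ‖(g : SU2).1 a b‖ * ‖(g : SU2).1 c d‖ ≤ 1 * 1 :=
        mul_le_mul (entry_norm_le g a b) (entry_norm_le g c d) (norm_nonneg _) zero_le_one
    _ = 1 := mul_one 1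

def h1 : SU2 := ⟨!![Complex.I, 0; 0, -Complex.I], by
  rw [Matrix.mem_specialUnitaryGroup_iff]
  refine ⟨Matrix.mem_unitaryGroup_iff.mpr ?_, by simp [Matrix.det_fin_two]⟩
  ext i j
  fin_cases i <;> fin_cases j <;>
    simp [Matrix.mul_apply, Fin.sum_univ_two, Matrix.star_eq_conjTranspose,
      Matrix.conjTranspose_apply]⟩

def w : SU2 := ⟨!![0, 1; -1, 0], by
  rw [Matrix.mem_specialUnitaryGroup_iff]
  refine ⟨Matrix.mem_unitaryGroup_iff.mpr ?_, by simp [Matrix.det_fin_two]⟩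
  ext i j
  fin_cases i <;> fin_cases j <;>
    simp [Matrix.mul_apply, Fin.sum_univ_two, Matrix.star_eq_conjTranspose,
      Matrix.conjTranspose_apply]⟩

lemma h1_mul (g : SU2) (j : Fin 2) :
    ((h1 * g : SU2) : SU2).1 0 j = Complex.I * g.1 0 j ∧ ((h1 * g : SU2) : SU2).1 1 j = -Complex.I * g.1 1 j := by
  constructor <;>
  · show (h1.1 * g.1) _ j = _
    simp [h1, Matrix.mul_apply, Fin.sum_univ_two]

lemma w_mul (g : SU2) (j : Fin 2) :
    ((w * g : SU2) : SU2).1 0 j = g.1 1 j ∧ ((w * g : SU2) : SU2).1 1 j = -g.1 0 j := by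
  constructor <;>
  · show (w.1 * g.1) _ j = _
    simp [w, Matrix.mul_apply, Fin.sum_univ_two]


lemma T_translate (μ : Measure SU2) [μ.IsMulLeftInvariant] (h : SU2) (a b c d : Fin 2) :
    ∫ g : SU2, ((h * g : SU2) : SU2).1 a b * ((h * g : SU2) : SU2).1 c d ∂μ
      = ∫ g : SU2, (g : SU2).1 a b * (g : SU2).1 c d ∂μ :=
  integral_mul_left_eq_self (fun g : SU2 => (g : SU2).1 a b * (g : SU2).1 c d) h

lemma T_diag_zero0 (μ : Measure SU2) [μ.IsMulLeftInvariant] (b d : Fin 2) :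
    ∫ g : SU2, (g : SU2).1 0 b * (g : SU2).1 0 d ∂μ = 0 := by
  have h := T_translate μ h1 0 b 0 d
  have key : ∀ g : SU2, ((h1 * g : SU2) : SU2).1 0 b * ((h1 * g : SU2) : SU2).1 0 d
      = -((g : SU2).1 0 b * (g : SU2).1 0 d) := by
    intro g
    rw [(h1_mul g b).1, (h1_mul g d).1]
    linear_combination ((g : SU2).1 0 b * (g : SU2).1 0 d) * Complex.I_sq
  simp_rw [key, integral_neg] at h
  linear_combination -h / 2

lemma T_diag_zero1 (μ : Measure SU2) [μ.IsMulLeftInvariant] (b d : Fin 2) :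
    ∫ g : SU2, (g : SU2).1 1 b * (g : SU2).1 1 d ∂μ = 0 := by
  have h := T_translate μ h1 1 b 1 d
  have key : ∀ g : SU2, ((h1 * g : SU2) : SU2).1 1 b * ((h1 * g : SU2) : SU2).1 1 d
      = -((g : SU2).1 1 b * (g : SU2).1 1 d) := by
    intro g
    rw [(h1_mul g b).2, (h1_mul g d).2]
    linear_combination ((g : SU2).1 1 b * (g : SU2).1 1 d) * Complex.I_sq
  simp_rw [key, integral_neg] at h
  linear_combination -h / 2

lemma T_swap (μ : Measure SU2) [μ.IsMulLeftInvariant] (b d : Fin 2) :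
    ∫ g : SU2, (g : SU2).1 0 b * (g : SU2).1 1 d ∂μ
      = -∫ g : SU2, (g : SU2).1 1 b * (g : SU2).1 0 d ∂μ := by
  have h := T_translate μ w 0 b 1 d
  have key : ∀ g : SU2, ((w * g : SU2) : SU2).1 0 b * ((w * g : SU2) : SU2).1 1 d
      = -((g : SU2).1 1 b * (g : SU2).1 0 d) := by
    intro g
    rw [(w_mul g b).1, (w_mul g d).2]; ring
  simp_rw [key, integral_neg] at h
  exact h.symm

lemma T_det (μ : Measure SU2) [IsProbabilityMeasure μ] (b d : Fin 2) :
    (∫ g : SU2, (g : SU2).1 0 b * (g : SU2).1 1 d ∂μ)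
      - ∫ g : SU2, (g : SU2).1 1 b * (g : SU2).1 0 d ∂μ = eps b d := by
  rw [← integral_sub (integrable_entry μ 0 b 1 d) (integrable_entry μ 1 b 0 d)]
  have key : ∀ g : SU2, (g : SU2).1 0 b * (g : SU2).1 1 d - (g : SU2).1 1 b * (g : SU2).1 0 d
      = eps b d := by
    intro g
    have hdet : ((g : SU2).1 : Matrix (Fin 2) (Fin 2) ℂ).det = 1 := (Submonoid.mem_inf.1 g.2).2
    rw [Matrix.det_fin_two] at hdet
    fin_cases b <;> fin_cases d
    · show (g : SU2).1 0 0 * (g : SU2).1 1 0 - (g : SU2).1 1 0 * (g : SU2).1 0 0 = eps 0 0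
      have he : eps 0 0 = 0 := by norm_num [eps]
      rw [he]; ring
    · show (g : SU2).1 0 0 * (g : SU2).1 1 1 - (g : SU2).1 1 0 * (g : SU2).1 0 1 = eps 0 1
      have he : eps 0 1 = 1 := by norm_num [eps]
      rw [he]; linear_combination hdet
    · show (g : SU2).1 0 1 * (g : SU2).1 1 0 - (g : SU2).1 1 1 * (g : SU2).1 0 0 = eps 1 0
      have he : eps 1 0 = -1 := by norm_num [eps]
      rw [he]; linear_combination -hdet
    · show (g : SU2).1 0 1 * (g : SU2).1 1 1 - (g : SU2).1 1 1 * (g : SU2).1 0 1 = eps 1 1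
      have he : eps 1 1 = 0 := by norm_num [eps]
      rw [he]; ring
  simp_rw [key]
  simp


/-- Group-averaging the two-fold tensor power of the fundamental representation projects onto the
singlet: `∫ g(a,b) g(c,d) dμ(g) = (1/2) ε(a,c) ε(b,d)`. -/
theorem haar_integral_singlet_projection (μ : Measure SU2) [μ.IsHaarMeasure]
    [IsProbabilityMeasure μ] (a b c d : Fin 2) :
    ∫ g : SU2, (g : SU2).1 a b * (g : SU2).1 c d ∂μ = (1 / 2 : ℂ) * eps a c * eps b d := by
  have hswap := T_swap μ b d
  have hdet := T_det μ b d
  fin_cases a <;> fin_cases c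
  · show ∫ g : SU2, (g : SU2).1 0 b * (g : SU2).1 0 d ∂μ = (1 / 2 : ℂ) * eps 0 0 * eps b d
    have he : eps 0 0 = 0 := by norm_num [eps]
    rw [he, T_diag_zero0 μ b d]; ring
  · show ∫ g : SU2, (g : SU2).1 0 b * (g : SU2).1 1 d ∂μ = (1 / 2 : ℂ) * eps 0 1 * eps b d
    have he : eps 0 1 = 1 := by norm_num [eps]
    rw [he]; linear_combination hdet / 2 + hswap / 2
  · show ∫ g : SU2, (g : SU2).1 1 b * (g : SU2).1 0 d ∂μ = (1 / 2 : ℂ) * eps 1 0 * eps b d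
    have he : eps 1 0 = -1 := by norm_num [eps]
    rw [he]; linear_combination -hdet / 2 + hswap / 2
  · show ∫ g : SU2, (g : SU2).1 1 b * (g : SU2).1 1 d ∂μ = (1 / 2 : ℂ) * eps 1 1 * eps b d
    have he : eps 1 1 = 0 := by norm_num [eps]
    rw [he, T_diag_zero1 μ b d]; ring
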